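/- arXiv:1707.02417 — 2 statements merged into one kernel-verified Lean document; each statement's English description precedes it below -/
import Mathlib

section
/- For every natural number n, B_n(-1) = 0, i.e. the polynomial B_n vanishes at z = -1. -/
/-- The `N`-th harmonic number `H_N = ∑_{k=1}^N 1/k` (with `H_0 = 0`). -/
noncomputable def H (N : ℕ) : ℝ := ∑ k ∈ Finset.Icc 1 N, (1 : ℝ) / k

/-- The Legendre polynomial of degree `n`,
`P_n(z) = 2^{-n} ∑_{k=0}^{n} (binom(n,k))² (z-1)^{n-k} (z+1)^k`, as a function on `ℝ`. -/
noncomputable def P (n : ℕ) (z : ℝ) : ℝ :=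
  (∑ k ∈ Finset.range (n + 1), ((n.choose k : ℝ)) ^ 2 * (z - 1) ^ (n - k) * (z + 1) ^ k) / 2 ^ n

/-- `B_n(z) = 4(H_{2n} - H_n) P_n(z) + 4 ∑_{k=0}^{n-1} (2k+1)/((n-k)(n+k+1)) P_k(z)`. -/
noncomputable def B (n : ℕ) (z : ℝ) : ℝ :=
  4 * (H (2 * n) - H n) * P n z +
    4 * ∑ k ∈ Finset.range n,
      (2 * (k : ℝ) + 1) / (((n : ℝ) - k) * ((n : ℝ) + k + 1)) * P k z

lemma P_neg_one (n : ℕ) : P n (-1) = (-1) ^ n := by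
  unfold P
  rw [Finset.sum_eq_single 0]
  · simp only [Nat.choose_zero_right, Nat.cast_one, one_pow, pow_zero, mul_one, one_mul,
      Nat.sub_zero]
    rw [show ((-1:ℝ) - 1) = (-1) * 2 by ring, mul_pow, mul_div_assoc,
      div_self (pow_ne_zero n two_ne_zero), mul_one]
  · intro b _ hb
    simp [zero_pow hb]
  · intro h
    simp at h

lemma H_succ (N : ℕ) : H (N + 1) = H N + 1 / ((N : ℝ) + 1) := by
  unfold H
  rw [Finset.sum_Icc_succ_top (by omega)]
  push_cast
  ring

lemma alt_sum (n : ℕ) :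
    ∑ j ∈ Finset.range (2 * n), (-1 : ℝ) ^ j / (j + 1) = H (2 * n) - H n := by
  induction n with
  | zero => simp [H]
  | succ n ih =>
    have h2 : 2 * (n + 1) = 2 * n + 1 + 1 := by ring
    rw [h2, Finset.sum_range_succ, Finset.sum_range_succ, ih, H_succ, H_succ, H_succ]
    have h3 : (-1 : ℝ) ^ (2 * n) = 1 := by
      rw [pow_mul]; norm_num
    have h4 : (-1 : ℝ) ^ (2 * n + 1) = -1 := by
      rw [pow_succ, h3]; ring
    rw [h3, h4]
    push_cast
    have e1 : (2 * (n : ℝ) + 1) ≠ 0 := by positivity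
    have e2 : (2 * (n : ℝ) + 1 + 1) ≠ 0 := by positivity
    have e3 : ((n : ℝ) + 1) ≠ 0 := by positivity
    field_simp
    ring

/-- For every natural number `n`, the polynomial `B_n` vanishes at `z = -1`. -/
theorem B_at_neg_one (n : ℕ) : B n (-1) = 0 := by
  unfold B
  have key : ∑ k ∈ Finset.range n,
      (2 * (k : ℝ) + 1) / (((n : ℝ) - k) * ((n : ℝ) + k + 1)) * P k (-1)
      = (-1) ^ (n + 1) * (H (2 * n) - H n) := by
    rw [← alt_sum, two_mul, Finset.sum_range_add, mul_add, Finset.mul_sum, Finset.mul_sum,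
      ← Finset.sum_range_reflect (fun j => (-1 : ℝ) ^ (n + 1) * ((-1) ^ j / (j + 1))) n,
      ← Finset.sum_add_distrib]
    apply Finset.sum_congr rfl
    intro k hk
    rw [Finset.mem_range] at hk
    rw [P_neg_one]
    have hc : ((n - 1 - k : ℕ) : ℝ) = (n : ℝ) - k - 1 := by
      have : n - 1 - k = n - (k + 1) := by omega
      rw [this, Nat.cast_sub (by omega)]
      push_cast; ring
    have hs : (-1 : ℝ) ^ (n + 1) * (-1) ^ (n - 1 - k) = (-1) ^ k := by
      rw [← pow_add, neg_one_pow_eq_pow_mod_two,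
        show (n + 1 + (n - 1 - k)) % 2 = k % 2 by omega, ← neg_one_pow_eq_pow_mod_two]
    have hnk : (-1 : ℝ) ^ (n + 1) * (-1) ^ (n + k) = -(-1) ^ k := by
      rw [← pow_add, neg_one_pow_eq_pow_mod_two,
        show (n + 1 + (n + k)) % 2 = (k + 1) % 2 by omega, ← neg_one_pow_eq_pow_mod_two,
        pow_succ]
      ring
    have hne1 : ((n : ℝ) - k) ≠ 0 := by
      have : (k : ℝ) < n := by exact_mod_cast hk
      linarith
    have hne2 : ((n : ℝ) + k + 1) ≠ 0 := by positivity
    have hnk1 : ((n + k : ℕ) : ℝ) + 1 = (n : ℝ) + k + 1 := by push_cast; ring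
    rw [hc, hnk1]
    rw [mul_div_assoc', mul_div_assoc', hs, hnk]
    rw [show (n : ℝ) - k - 1 + 1 = (n : ℝ) - k by ring]
    field_simp
    ring
  rw [key, P_neg_one, pow_succ]
  ring
end

section
/- For every natural number n, the polynomial identity 2(z-1) dB_n(z)/dz + B_n(z) - 2(2n+1) R_n(z) = Σ_{k=0}^{n-1} [ (-1)^{n+k} 8(2k+1)(H_{2n} - H_n) + 8(2k+1) Σ_{m=k}^{n-1} (-1)^{m+k} (2m+1)/((n-m)(n+m+1)) - 4(2k+1)^2/((n-k)(n+k+1)) - (-1)^{n+k} 4(2n+1)(2k+1)/((n-k)(n+k+1)) ] P_k(z) holds for all real z. -/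
/-- `R_n(z) = 2(H_{2n} - H_n) P_n(z)
               + 2 ∑_{k=0}^{n-1} (-1)^{n+k} (2k+1)/((n-k)(n+k+1)) P_k(z)`. -/
noncomputable def R (n : ℕ) (z : ℝ) : ℝ :=
  2 * (H (2 * n) - H n) * P n z +
    2 * ∑ k ∈ Finset.range n,
      (-1 : ℝ) ^ (n + k) * (2 * (k : ℝ) + 1) / (((n : ℝ) - k) * ((n : ℝ) + k + 1)) * P k z

open Finset

noncomputable def c (n k : ℕ) : ℝ := (n.choose k : ℝ) * ((n+k).choose k : ℝ)

lemma inner_id (n t : ℕ) (ht : t ≤ n) :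
    ∑ k ∈ range (n+1), n.choose k * n.choose k * k.choose (n - t)
      = n.choose t * (n+t).choose t := by
  set s := n - t with hs
  have hsn : s ≤ n := Nat.sub_le _ _
  have h1 : ∑ k ∈ range (n+1), n.choose k * n.choose k * k.choose s
      = ∑ k ∈ Icc s n, n.choose k * n.choose k * k.choose s := by
    refine (Finset.sum_subset ?_ ?_).symm
    · intro k hk
      simp only [mem_Icc] at hk
      simp [Nat.lt_succ_iff, hk.2]
    · intro k hk hk2
      simp only [mem_Icc, mem_range, Nat.lt_succ_iff] at hk hk2
      have : k < s := by omega
      simp [Nat.choose_eq_zero_of_lt this]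
  rw [h1]
  have h2 : ∀ k ∈ Icc s n, n.choose k * n.choose k * k.choose s
      = n.choose k * (n.choose s * t.choose (k - s)) := by
    intro k hk
    simp only [mem_Icc] at hk
    rw [mul_assoc, Nat.choose_mul (n := n) hk.1]
    have : n - s = t := by omega
    rw [this]
  rw [Finset.sum_congr rfl h2, show Icc s n = Ico s (n+1) by rw [Finset.Ico_add_one_right_eq_Icc],
    Finset.sum_Ico_eq_sum_range, show n + 1 - s = t + 1 by omega]
  have h3 : ∀ i ∈ range (t+1), n.choose (s + i) * (n.choose s * t.choose (s + i - s))
      = n.choose s * (t.choose i * n.choose (t - i)) := by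
    intro i hi
    simp only [mem_range, Nat.lt_succ_iff] at hi
    have e1 : s + i - s = i := by omega
    have e2 : n.choose (s + i) = n.choose (t - i) := by
      have : n - (s + i) = t - i := by omega
      rw [← this, Nat.choose_symm (by omega)]
    rw [e1, e2]; ring
  rw [Finset.sum_congr rfl h3, ← Finset.mul_sum]
  have hv : (n + t).choose t = ∑ i ∈ range (t+1), t.choose i * n.choose (t - i) := by
    rw [show n + t = t + n by omega, Nat.add_choose_eq t n t,
      Finset.Nat.sum_antidiagonal_eq_sum_range_succ_mk]
  rw [← hv, Nat.choose_symm ht]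

lemma P_eq (n : ℕ) (z : ℝ) :
    P n z = ∑ t ∈ range (n+1), c n t * ((z-1)/2)^t := by
  set u : ℝ := (z-1)/2 with hu
  have hz1 : z - 1 = 2*u := by rw [hu]; ring
  have hz2 : z + 1 = 2*(u+1) := by rw [hu]; ring
  have step1 : P n z = ∑ k ∈ range (n+1),
      (n.choose k : ℝ)^2 * (u^(n-k) * (u+1)^k) := by
    rw [P, Finset.sum_div]
    refine Finset.sum_congr rfl fun k hk => ?_
    simp only [mem_range, Nat.lt_succ_iff] at hk
    rw [hz1, hz2, mul_pow, mul_pow]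
    have h2 : (2:ℝ)^(n-k) * (2:ℝ)^k = 2^n := by
      rw [← pow_add, Nat.sub_add_cancel hk]
    field_simp
    ring_nf
    rw [← h2]; ring
  rw [step1]
  have step2 : ∀ k, ((u:ℝ)+1)^k = ∑ j ∈ range (k+1), (k.choose j : ℝ) * u^j := by
    intro k
    rw [add_pow]
    exact Finset.sum_congr rfl fun j hj => by ring
  have step3 : ∀ k ∈ range (n+1),
      (n.choose k : ℝ)^2 * (u^(n-k) * (u+1)^k)
        = ∑ t ∈ Icc (n-k) n, (n.choose k : ℝ)^2 * (k.choose (n-t) : ℝ) * u^t := by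
    intro k hk
    simp only [mem_range, Nat.lt_succ_iff] at hk
    rw [show Icc (n-k) n = Ico (n-k) (n+1) by rw [Finset.Ico_add_one_right_eq_Icc],
      Finset.sum_Ico_eq_sum_range, show n + 1 - (n-k) = k + 1 by omega]
    rw [step2 k, Finset.mul_sum, Finset.mul_sum]
    refine Finset.sum_congr rfl fun j hj => ?_
    simp only [mem_range, Nat.lt_succ_iff] at hj
    have e1 : n - (n - k + j) = k - j := by omega
    have e2 : (k.choose (k-j) : ℝ) = (k.choose j : ℝ) := by
      rw [Nat.choose_symm hj]
    rw [e1, e2, show u ^ (n-k+j) = u^(n-k) * u^j from (pow_add u (n-k) j)]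
    ring
  rw [Finset.sum_congr rfl step3]
  have step4 : ∀ k ∈ range (n+1),
      ∑ t ∈ Icc (n-k) n, (n.choose k : ℝ)^2 * (k.choose (n-t) : ℝ) * u^t
        = ∑ t ∈ range (n+1), (n.choose k : ℝ)^2 * (k.choose (n-t) : ℝ) * u^t := by
    intro k hk
    simp only [mem_range, Nat.lt_succ_iff] at hk
    refine Finset.sum_subset ?_ ?_
    · intro t ht; simp only [mem_Icc] at ht; simp [Nat.lt_succ_iff, ht.2]
    · intro t ht ht2
      simp only [mem_range, Nat.lt_succ_iff] at ht
      simp only [mem_Icc, not_and, not_le] at ht2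
      have : k < n - t := by omega
      rw [Nat.choose_eq_zero_of_lt this]
      simp
  rw [Finset.sum_congr rfl step4, Finset.sum_comm]
  refine Finset.sum_congr rfl fun t ht => ?_
  simp only [mem_range, Nat.lt_succ_iff] at ht
  have := inner_id n t ht
  have hcast : ∑ k ∈ range (n+1), (n.choose k : ℝ)^2 * (k.choose (n-t) : ℝ)
      = (n.choose t : ℝ) * ((n+t).choose t : ℝ) := by
    have := congrArg (Nat.cast : ℕ → ℝ) this
    push_cast at this
    rw [← this]
    exact Finset.sum_congr rfl fun k _ => by ring
  rw [← Finset.sum_mul, hcast, c]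

lemma c_zero {j k : ℕ} (h : j < k) : c j k = 0 := by
  simp [c, Nat.choose_eq_zero_of_lt h]

lemma coeff_id_nat (j k : ℕ) :
    (j + 1 - k) * ((j+1).choose k * ((j+1+k).choose k))
      = (j + 1 + k) * (j.choose k * ((j+k).choose k)) := by
  rcases le_or_gt k (j+1) with h | h
  · have h1 : (j+1).choose k * (j + 1 - k) = j.choose k * (j+1) :=
      (Nat.choose_mul_succ_eq j k).symm
    have h2 : (j+1+k).choose k * (j + 1) = (j+k).choose k * (j+k+1) := by
      rw [show j+1+k = j+k+1 from by omega]
      have := Nat.choose_mul_succ_eq (j+k) k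
      rw [show j + k + 1 - k = j + 1 from by omega] at this
      omega
    have key : (j+1) * ((j + 1 - k) * ((j+1).choose k * ((j+1+k).choose k)))
        = (j+1) * ((j + 1 + k) * (j.choose k * ((j+k).choose k))) := by
      calc (j+1) * ((j + 1 - k) * ((j+1).choose k * ((j+1+k).choose k)))
          = ((j+1).choose k * (j + 1 - k)) * ((j+1+k).choose k * (j+1)) := by ring
        _ = (j.choose k * (j+1)) * ((j+k).choose k * (j+k+1)) := by rw [h1, h2]
        _ = (j+1) * ((j + 1 + k) * (j.choose k * ((j+k).choose k))) := by ring
    exact Nat.eq_of_mul_eq_mul_left (by omega) key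
  · have h1 : j + 1 - k = 0 := by omega
    have h2 : j.choose k = 0 := Nat.choose_eq_zero_of_lt (by omega)
    simp [h1, h2]

lemma coeff_id (j k : ℕ) (h : k ≤ j + 1) :
    ((j:ℝ) + 1 - k) * c (j+1) k = ((j:ℝ) + 1 + k) * c j k := by
  have := congrArg (Nat.cast : ℕ → ℝ) (coeff_id_nat j k)
  push_cast [Nat.cast_sub h] at this
  simpa [c, mul_assoc] using this

lemma telescope (k : ℕ) : ∀ n, k ≤ n →
    ∑ j ∈ Ico k n, (-1:ℝ)^(n+j) * (2*j+1) * c j k = ((k:ℝ) - n) * c n k := by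
  refine Nat.le_induction ?_ ?_
  · simp
  · intro n hkn ih
    rw [Finset.sum_Ico_succ_top hkn]
    have e1 : ∀ j, (-1:ℝ)^(n+1+j) = -((-1:ℝ)^(n+j)) := by
      intro j
      rw [show n+1+j = (n+j)+1 by omega, pow_succ]
      ring
    have e2 : ∑ j ∈ Ico k n, (-1:ℝ)^(n+1+j) * (2*j+1) * c j k
        = -∑ j ∈ Ico k n, (-1:ℝ)^(n+j) * (2*j+1) * c j k := by
      rw [← Finset.sum_neg_distrib]
      exact Finset.sum_congr rfl fun j _ => by rw [e1]; ring
    rw [e2, ih]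
    have e3 : (-1:ℝ)^(n+1+n) = -1 := by
      have : Odd (n+1+n) := ⟨n, by omega⟩
      exact Odd.neg_one_pow this
    rw [e3]
    have := coeff_id n k (by omega)
    push_cast
    nlinarith [this]

lemma hasDerivAt_P (n : ℕ) (z : ℝ) :
    HasDerivAt (P n)
      (∑ k ∈ range (n+1), c n k * ((k:ℝ) * ((z-1)/2)^(k-1) * (1/2))) z := by
  have hfun : P n = fun w => ∑ t ∈ range (n+1), c n t * ((w-1)/2)^t :=
    funext fun w => P_eq n w
  rw [hfun]
  refine HasDerivAt.fun_sum fun k _ => ?_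
  have h1 : HasDerivAt (fun w : ℝ => (w-1)/2) (1/2) z := by
    simpa using ((hasDerivAt_id z).sub_const 1).div_const 2
  have h2 : HasDerivAt (fun w : ℝ => ((w-1)/2)^k)
      ((k:ℝ) * ((z-1)/2)^(k-1) * (1/2)) z := h1.pow k
  exact h2.const_mul (c n k)

lemma legendre_deriv (n : ℕ) (z : ℝ) :
    (z - 1) * deriv (P n) z
      = n * P n z + ∑ j ∈ range n, (-1:ℝ)^(n+j) * (2*(j:ℝ)+1) * P j z := by
  set u : ℝ := (z-1)/2 with hu
  have hderiv : deriv (P n) z = ∑ k ∈ range (n+1), c n k * ((k:ℝ) * u^(k-1) * (1/2)) :=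
    (hasDerivAt_P n z).deriv
  have lhs_eq : (z - 1) * deriv (P n) z = ∑ k ∈ range (n+1), (k:ℝ) * c n k * u^k := by
    rw [hderiv, Finset.mul_sum]
    refine Finset.sum_congr rfl fun k _ => ?_
    cases k with
    | zero => simp
    | succ m =>
      have : u^(m+1) = u^m * u := pow_succ u m
      rw [this]
      simp only [Nat.add_sub_cancel]
      rw [hu]
      push_cast
      ring
  rw [lhs_eq]
  -- rewrite RHS
  have rhs1 : ∑ j ∈ range n, (-1:ℝ)^(n+j) * (2*(j:ℝ)+1) * P j z
      = ∑ j ∈ range n, ∑ k ∈ range n, (-1:ℝ)^(n+j) * (2*(j:ℝ)+1) * (c j k * u^k) := by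
    refine Finset.sum_congr rfl fun j hj => ?_
    simp only [mem_range] at hj
    rw [P_eq, Finset.mul_sum]
    refine Finset.sum_subset (Finset.range_subset_range.2 hj) fun k _ hk2 => ?_
    simp only [mem_range, Nat.lt_succ_iff, not_le] at hk2
    rw [c_zero hk2]; ring
  rw [rhs1, Finset.sum_comm]
  have inner : ∀ k ∈ range n,
      ∑ j ∈ range n, (-1:ℝ)^(n+j) * (2*(j:ℝ)+1) * (c j k * u^k)
        = ((k:ℝ) - n) * c n k * u^k := by
    intro k hk
    simp only [mem_range] at hk
    have hsub : ∑ j ∈ Ico k n, (-1:ℝ)^(n+j) * (2*(j:ℝ)+1) * (c j k * u^k)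
        = ∑ j ∈ range n, (-1:ℝ)^(n+j) * (2*(j:ℝ)+1) * (c j k * u^k) := by
      refine Finset.sum_subset ?_ fun j hj hj2 => ?_
      · intro j hj
        simp only [mem_Ico] at hj
        simp [mem_range, hj.2]
      · simp only [mem_range] at hj
        simp only [mem_Ico, not_and, not_le] at hj2
        rw [c_zero (by omega : j < k)]; ring
    rw [← hsub]
    have t := telescope k n hk.le
    calc ∑ j ∈ Ico k n, (-1:ℝ)^(n+j) * (2*(j:ℝ)+1) * (c j k * u^k)
        = (∑ j ∈ Ico k n, (-1:ℝ)^(n+j) * (2*(j:ℝ)+1) * c j k) * u^k := by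
          rw [Finset.sum_mul]
          exact Finset.sum_congr rfl fun j _ => by ring
      _ = ((k:ℝ) - n) * c n k * u^k := by rw [t]
  rw [Finset.sum_congr rfl inner, P_eq]
  rw [show (z-1)/2 = u from rfl]
  rw [Finset.sum_range_succ, Finset.sum_range_succ, mul_add, Finset.mul_sum,
    add_right_comm, ← Finset.sum_add_distrib]
  congr 1
  · exact Finset.sum_congr rfl fun x _ => by ring
  · ring

lemma hasDerivAt_P' (m : ℕ) (z : ℝ) : HasDerivAt (P m) (deriv (P m) z) z :=
  (hasDerivAt_P m z).differentiableAt.hasDerivAt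


/-- For every natural number `n` and all real `z`,
`2(z-1) B_n'(z) + B_n(z) - 2(2n+1) R_n(z)
   = ∑_{k=0}^{n-1} [ (-1)^{n+k} 8(2k+1)(H_{2n} - H_n)
       + 8(2k+1) ∑_{m=k}^{n-1} (-1)^{m+k} (2m+1)/((n-m)(n+m+1))
       - 4(2k+1)²/((n-k)(n+k+1))
       - (-1)^{n+k} 4(2n+1)(2k+1)/((n-k)(n+k+1)) ] P_k(z)`. -/
theorem rhs_expansion_in_legendre (n : ℕ) (z : ℝ) :
    2 * (z - 1) * deriv (B n) z + B n z - 2 * (2 * (n : ℝ) + 1) * R n z =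
      ∑ k ∈ Finset.range n,
        ((-1 : ℝ) ^ (n + k) * (8 * (2 * (k : ℝ) + 1)) * (H (2 * n) - H n)
          + 8 * (2 * (k : ℝ) + 1) *
              ∑ m ∈ Finset.Ico k n,
                (-1 : ℝ) ^ (m + k) * (2 * (m : ℝ) + 1) / (((n : ℝ) - m) * ((n : ℝ) + m + 1))
          - 4 * (2 * (k : ℝ) + 1) ^ 2 / (((n : ℝ) - k) * ((n : ℝ) + k + 1))
          - (-1 : ℝ) ^ (n + k) * (4 * (2 * (n : ℝ) + 1) * (2 * (k : ℝ) + 1)) /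
              (((n : ℝ) - k) * ((n : ℝ) + k + 1))) * P k z := by
  have hB : HasDerivAt (B n)
      (4 * (H (2 * n) - H n) * deriv (P n) z +
        4 * ∑ k ∈ Finset.range n,
          (2 * (k : ℝ) + 1) / (((n : ℝ) - k) * ((n : ℝ) + k + 1)) * deriv (P k) z) z := by
    exact ((hasDerivAt_P' n z).const_mul _).add
      ((HasDerivAt.fun_sum fun k _ => (hasDerivAt_P' k z).const_mul _).const_mul 4)
  rw [hB.deriv]
  -- key derivative identities
  have key : ∀ m : ℕ, 2 * (z - 1) * deriv (P m) z
      = 2 * (m:ℝ) * P m z + 2 * ∑ j ∈ range m, (-1:ℝ)^(m+j) * (2*(j:ℝ)+1) * P j z := by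
    intro m
    linear_combination 2 * legendre_deriv m z
  -- h2 : the sum part
  have h2 : 8 * (z - 1) *
      (∑ k ∈ Finset.range n,
        (2 * (k : ℝ) + 1) / (((n : ℝ) - k) * ((n : ℝ) + k + 1)) * deriv (P k) z)
      = 8 * (∑ k ∈ range n, (k:ℝ) * ((2 * (k : ℝ) + 1) / (((n : ℝ) - k) * ((n : ℝ) + k + 1))) * P k z)
        + ∑ k ∈ range n,
            (∑ m ∈ Ico (k+1) n,
              8 * ((2 * (m : ℝ) + 1) / (((n : ℝ) - m) * ((n : ℝ) + m + 1)))
                * ((-1:ℝ)^(m+k) * (2*(k:ℝ)+1))) * P k z := by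
    calc 8 * (z - 1) *
        (∑ k ∈ Finset.range n,
          (2 * (k : ℝ) + 1) / (((n : ℝ) - k) * ((n : ℝ) + k + 1)) * deriv (P k) z)
        = ∑ k ∈ range n,
            (2 * (k : ℝ) + 1) / (((n : ℝ) - k) * ((n : ℝ) + k + 1)) *
              (4 * (2 * (z - 1) * deriv (P k) z)) := by
          rw [Finset.mul_sum]
          exact Finset.sum_congr rfl fun k _ => by ring
      _ = ∑ k ∈ range n,
            (8 * (k:ℝ) * ((2 * (k : ℝ) + 1) / (((n : ℝ) - k) * ((n : ℝ) + k + 1))) * P k z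
              + ∑ j ∈ range k,
                  8 * ((2 * (k : ℝ) + 1) / (((n : ℝ) - k) * ((n : ℝ) + k + 1)))
                    * ((-1:ℝ)^(k+j) * (2*(j:ℝ)+1) * P j z)) := by
          refine Finset.sum_congr rfl fun k _ => ?_
          rw [key k]
          rw [show (∑ j ∈ range k,
                8 * ((2 * (k : ℝ) + 1) / (((n : ℝ) - k) * ((n : ℝ) + k + 1)))
                  * ((-1:ℝ)^(k+j) * (2*(j:ℝ)+1) * P j z))
              = (8 * ((2 * (k : ℝ) + 1) / (((n : ℝ) - k) * ((n : ℝ) + k + 1))))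
                  * ∑ j ∈ range k, (-1:ℝ)^(k+j) * (2*(j:ℝ)+1) * P j z from
            (Finset.mul_sum _ _ _).symm]
          ring
      _ = (∑ k ∈ range n,
            8 * (k:ℝ) * ((2 * (k : ℝ) + 1) / (((n : ℝ) - k) * ((n : ℝ) + k + 1))) * P k z)
          + ∑ k ∈ range n, ∑ j ∈ range k,
              8 * ((2 * (k : ℝ) + 1) / (((n : ℝ) - k) * ((n : ℝ) + k + 1)))
                * ((-1:ℝ)^(k+j) * (2*(j:ℝ)+1) * P j z) := Finset.sum_add_distrib
      _ = 8 * (∑ k ∈ range n, (k:ℝ) * ((2 * (k : ℝ) + 1) / (((n : ℝ) - k) * ((n : ℝ) + k + 1))) * P k z)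
          + ∑ k ∈ range n,
              (∑ m ∈ Ico (k+1) n,
                8 * ((2 * (m : ℝ) + 1) / (((n : ℝ) - m) * ((n : ℝ) + m + 1)))
                  * ((-1:ℝ)^(m+k) * (2*(k:ℝ)+1))) * P k z := by
          congr 1
          · rw [Finset.mul_sum]
            exact Finset.sum_congr rfl fun k _ => by ring
          · have swap : ∑ k ∈ range n, ∑ j ∈ range k,
                (8 * ((2 * (k : ℝ) + 1) / (((n : ℝ) - k) * ((n : ℝ) + k + 1)))
                  * ((-1:ℝ)^(k+j) * (2*(j:ℝ)+1) * P j z))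
                = ∑ j ∈ range n, ∑ k ∈ Ico (j+1) n,
                    (8 * ((2 * (k : ℝ) + 1) / (((n : ℝ) - k) * ((n : ℝ) + k + 1)))
                      * ((-1:ℝ)^(k+j) * (2*(j:ℝ)+1) * P j z)) := by
              have := Finset.sum_Ico_Ico_comm' 0 n
                (fun i j => 8 * ((2 * (j : ℝ) + 1) / (((n : ℝ) - j) * ((n : ℝ) + j + 1)))
                      * ((-1:ℝ)^(j+i) * (2*(i:ℝ)+1) * P i z))
              simp only [← Finset.range_eq_Ico] at this
              exact this.symm
            rw [swap]
            refine Finset.sum_congr rfl fun j _ => ?_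
            rw [Finset.sum_mul]
            exact Finset.sum_congr rfl fun m _ => by ring
  -- RHS transformation
  have hRHS : (∑ k ∈ Finset.range n,
        ((-1 : ℝ) ^ (n + k) * (8 * (2 * (k : ℝ) + 1)) * (H (2 * n) - H n)
          + 8 * (2 * (k : ℝ) + 1) *
              ∑ m ∈ Finset.Ico k n,
                (-1 : ℝ) ^ (m + k) * (2 * (m : ℝ) + 1) / (((n : ℝ) - m) * ((n : ℝ) + m + 1))
          - 4 * (2 * (k : ℝ) + 1) ^ 2 / (((n : ℝ) - k) * ((n : ℝ) + k + 1))
          - (-1 : ℝ) ^ (n + k) * (4 * (2 * (n : ℝ) + 1) * (2 * (k : ℝ) + 1)) /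
              (((n : ℝ) - k) * ((n : ℝ) + k + 1))) * P k z)
      = ∑ k ∈ range n,
          (8 * (H (2 * n) - H n) * ((-1:ℝ)^(n+k) * (2*(k:ℝ)+1) * P k z)
            + (∑ m ∈ Ico (k+1) n,
                8 * ((2 * (m : ℝ) + 1) / (((n : ℝ) - m) * ((n : ℝ) + m + 1)))
                  * ((-1:ℝ)^(m+k) * (2*(k:ℝ)+1))) * P k z
            + 8 * ((k:ℝ) * ((2 * (k : ℝ) + 1) / (((n : ℝ) - k) * ((n : ℝ) + k + 1))) * P k z)
            + 4 * ((2 * (k : ℝ) + 1) / (((n : ℝ) - k) * ((n : ℝ) + k + 1)) * P k z)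
            - 4 * (2 * (n:ℝ) + 1) *
                ((-1 : ℝ) ^ (n + k) * (2 * (k : ℝ) + 1) / (((n : ℝ) - k) * ((n : ℝ) + k + 1)) * P k z)) := by
    refine Finset.sum_congr rfl fun k hk => ?_
    simp only [mem_range] at hk
    rw [Finset.sum_eq_sum_Ico_succ_bot hk]
    have heven : (-1:ℝ)^(k+k) = 1 := Even.neg_one_pow ⟨k, rfl⟩
    rw [heven]
    have hin : 8 * (2 * (k : ℝ) + 1) *
        (∑ m ∈ Ico (k+1) n,
          (-1 : ℝ) ^ (m + k) * (2 * (m : ℝ) + 1) / (((n : ℝ) - m) * ((n : ℝ) + m + 1)))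
        = ∑ m ∈ Ico (k+1) n,
            8 * ((2 * (m : ℝ) + 1) / (((n : ℝ) - m) * ((n : ℝ) + m + 1)))
              * ((-1:ℝ)^(m+k) * (2*(k:ℝ)+1)) := by
      rw [Finset.mul_sum]
      exact Finset.sum_congr rfl fun m _ => by ring
    rw [show Ico (k+1) n = Ico (k+1) n from rfl]
    linear_combination (P k z) * hin
  rw [hRHS]
  -- split RHS sum into pieces
  rw [Finset.sum_sub_distrib, Finset.sum_add_distrib, Finset.sum_add_distrib,
    Finset.sum_add_distrib, ← Finset.mul_sum, ← Finset.mul_sum, ← Finset.mul_sum,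
    ← Finset.mul_sum]
  -- now finish
  unfold B R
  linear_combination (4 * (H (2 * n) - H n)) * key n + h2
end
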